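/- There exist sequences of integers m(r), k(r) (r ≥ 0) such that, defining g_k(λ) = (∑_{j=0}^k λ^j/j!)e^{-λ}, for all r ≥ 1 and all m ≥ m(r) we have g_{k(r−1)}(m) ≤ 1/3, and for all k ≥ k(r) we have g_k(m(r)) ≥ 2/3. Consequently, for any r > s ≥ 0, |g_{k(r)}(m(s+1)) − g_{k(s)}(m(s+1))| ≥ 1/3. -/

import Mathlib

open Filter Topology
open scoped BigOperators

/-- The Poisson cumulative distribution function `g_k(λ) = (∑_{j ≤ k} λ^j/j!)·e^{-λ}`. -/
noncomputable def poissonCDF (k : ℕ) (l : ℝ) : ℝ :=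
  (∑ j ∈ Finset.range (k + 1), l ^ j / (Nat.factorial j)) * Real.exp (-l)

lemma poissonCDF_tendsto_zero (k : ℕ) :
    Tendsto (fun l : ℝ => poissonCDF k l) atTop (𝓝 0) := by
  have : ∀ l : ℝ, poissonCDF k l
      = ∑ j ∈ Finset.range (k + 1), (l ^ j * Real.exp (-l)) / (Nat.factorial j) := by
    intro l
    simp [poissonCDF, Finset.sum_mul, div_mul_eq_mul_div]
  simp only [this]
  have h0 : (0 : ℝ) = ∑ j ∈ Finset.range (k + 1), (0 : ℝ) / (Nat.factorial j) := by simp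
  rw [h0]
  refine tendsto_finset_sum _ (fun j _ => ?_)
  exact (Real.tendsto_pow_mul_exp_neg_atTop_nhds_zero j).div_const _

lemma exists_m (k : ℕ) : ∃ N : ℕ, ∀ M : ℕ, N ≤ M → poissonCDF k (M : ℝ) ≤ 1 / 3 := by
  have h := (poissonCDF_tendsto_zero k).comp tendsto_natCast_atTop_atTop (α := ℕ)
  have h2 := h.eventually (eventually_le_nhds (show (0:ℝ) < 1/3 by norm_num))
  rcases (eventually_atTop.mp h2) with ⟨N, hN⟩
  exact ⟨N, fun M hM => hN M hM⟩

lemma hasSum_exp (x : ℝ) : HasSum (fun n : ℕ => x ^ n / (Nat.factorial n)) (Real.exp x) := by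
  rw [Real.exp_eq_exp_ℝ, NormedSpace.exp_eq_tsum_div]
  exact (NormedSpace.expSeries_div_summable x).hasSum

lemma poissonCDF_tendsto_one (m : ℕ) :
    Tendsto (fun K : ℕ => poissonCDF K ((m : ℕ) : ℝ)) atTop (𝓝 1) := by
  have h := (hasSum_exp (m : ℝ)).tendsto_sum_nat
  have h1 : Tendsto (fun K : ℕ => ∑ j ∈ Finset.range (K + 1), (m : ℝ) ^ j / (Nat.factorial j))
      atTop (𝓝 (Real.exp m)) := h.comp (tendsto_add_atTop_nat 1)
  have := h1.mul_const (Real.exp (-(m : ℝ)))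
  simpa [poissonCDF, ← Real.exp_add] using this

lemma exists_k (m : ℕ) : ∃ N : ℕ, ∀ K : ℕ, N ≤ K → (2 : ℝ) / 3 ≤ poissonCDF K (m : ℝ) := by
  have h2 := (poissonCDF_tendsto_one m).eventually
    (eventually_ge_nhds (show (2:ℝ)/3 < 1 by norm_num))
  rcases (eventually_atTop.mp h2) with ⟨N, hN⟩
  exact ⟨N, fun K hK => hN K hK⟩

noncomputable def pseq : ℕ → ℕ × ℕ
  | 0 => (0, 0)
  | r + 1 =>
      let prev := pseq r
      let M := (exists_m prev.2).choose
      (M, max prev.2 (exists_k M).choose)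

theorem firstOrderComplexity.separated_poisson_sums :
    ∃ m k : ℕ → ℕ, m 0 = 0 ∧ k 0 = 0 ∧
      (∀ r : ℕ, 1 ≤ r → ∀ M : ℕ, m r ≤ M → poissonCDF (k (r - 1)) (M : ℝ) ≤ 1 / 3) ∧
      (∀ r : ℕ, 1 ≤ r → ∀ K : ℕ, k r ≤ K → (2 : ℝ) / 3 ≤ poissonCDF K (m r : ℝ)) ∧
      (∀ r s : ℕ, s < r →
        (1 : ℝ) / 3 ≤ |poissonCDF (k r) ((m (s + 1) : ℕ) : ℝ)
                        - poissonCDF (k s) ((m (s + 1) : ℕ) : ℝ)|) := by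
  refine ⟨fun r => (pseq r).1, fun r => (pseq r).2, rfl, rfl, ?_, ?_, ?_⟩
  · -- first property
    intro r hr M hM
    dsimp only at hM ⊢
    obtain ⟨r', rfl⟩ := Nat.exists_eq_add_of_le hr
    have : (pseq (1 + r')).1 = (exists_m (pseq r').2).choose := by
      rw [Nat.add_comm]; rfl
    rw [this] at hM
    have h1 : 1 + r' - 1 = r' := by omega
    rw [h1]
    exact (exists_m (pseq r').2).choose_spec M hM
  · -- second property
    intro r hr K hK
    dsimp only at hK ⊢
    obtain ⟨r', rfl⟩ := Nat.exists_eq_add_of_le hr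
    have hm : (pseq (1 + r')).1 = (exists_m (pseq r').2).choose := by
      rw [Nat.add_comm]; rfl
    have hk : (pseq (1 + r')).2
        = max (pseq r').2 (exists_k (exists_m (pseq r').2).choose).choose := by
      rw [Nat.add_comm]; rfl
    rw [hm]
    refine (exists_k (exists_m (pseq r').2).choose).choose_spec K ?_
    rw [hk] at hK
    exact le_trans (le_max_right _ _) hK
  · -- consequence
    intro r s hsr
    have kmono : Monotone (fun r => (pseq r).2) := by
      refine monotone_nat_of_le_succ (fun n => ?_)
      show (pseq n).2 ≤ max (pseq n).2 _
      exact le_max_left _ _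
    have h1 : poissonCDF (pseq s).2 ((pseq (s+1)).1 : ℝ) ≤ 1 / 3 := by
      have := (exists_m (pseq s).2).choose_spec (pseq (s+1)).1 (le_of_eq rfl)
      simpa using this
    have h2 : (2 : ℝ) / 3 ≤ poissonCDF (pseq r).2 ((pseq (s+1)).1 : ℝ) := by
      refine (exists_k (exists_m (pseq s).2).choose).choose_spec (pseq r).2 ?_
      have : (pseq (s+1)).2 ≤ (pseq r).2 := kmono hsr
      exact le_trans (le_max_right (pseq s).2 _) this
    rw [abs_of_nonneg (by linarith)]
    linarith
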